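/- Let n ≥ 1 and let G₁, …, Gₙ be independent random variables with P(G_i = t) = 2^{−t} for every integer t ≥ 1 (geometric with parameter 1/2). Then the probability that there exists an integer t ≥ 1 attained by exactly one of the variables (i.e., exactly one index i satisfies G_i = t) is at least 2/3. (Theorem 2, part 1, of the paper: when n neighbors of a station v execute Green-Decay(∞), this event is exactly the event that v receives the message.) -/

import Mathlib

open MeasureTheory ProbabilityTheory

namespace GreenDecayAux

noncomputable def a (t : ℕ) : ENNReal := 2⁻¹ ^ t

lemma a_le_one (t : ℕ) : a t ≤ 1 := pow_le_one' (by simp [ENNReal.inv_le_one]) t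

lemma a_ne_top (t : ℕ) : a t ≠ ⊤ := by simp [a]

lemma a_succ (t : ℕ) : a (t+1) = 2⁻¹ * a t := by rw [a, a, pow_succ]; ring

lemma two_mul_a_succ (t : ℕ) : 2 * a (t+1) = a t := by
  rw [a_succ, ← mul_assoc, ENNReal.mul_inv_cancel (by norm_num) (by norm_num), one_mul]

noncomputable def q (n : ℕ) : ENNReal :=
  ∑' t : ℕ, (n : ENNReal) * (a (t+1) * (1 - 2 * a (t+1)) ^ (n-1))

lemma binom (z : ENNReal) (m : ℕ) :
    ∑ k ∈ Finset.Icc 1 (m+1), ((m+1).choose k : ENNReal) * (k * z ^ (k-1))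
      = (m+1) * (1+z) ^ m := by
  rw [← Finset.Ico_add_one_right_eq_Icc, Finset.sum_Ico_eq_sum_range]
  simp only [show m + 1 + 1 - 1 = m + 1 from rfl]
  have hstep : ∀ j, (((m+1).choose (1+j) : ℕ) : ENNReal) * (((1+j : ℕ) : ENNReal) * z ^ (1+j-1))
      = ((m:ENNReal)+1) * ((m.choose j : ENNReal) * z ^ j) := by
    intro j
    have h : (m+1).choose (1+j) * (1+j) = (m+1) * m.choose j := by
      rw [add_comm 1 j, ← Nat.add_one_mul_choose_eq]
    have h2 : (((m+1).choose (1+j) : ℕ) : ENNReal) * ((1+j : ℕ) : ENNReal)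
        = ((m:ENNReal)+1) * (m.choose j : ENNReal) := by
      exact_mod_cast congrArg (Nat.cast (R := ENNReal)) h
    have hexp : 1 + j - 1 = j := by omega
    rw [hexp, ← mul_assoc, h2, mul_assoc]
  have : ∀ j ∈ Finset.range (m+1),
      (((m+1).choose (1+j) : ℕ) : ENNReal) * (((1+j : ℕ) : ENNReal) * z ^ (1+j-1))
      = ((m:ENNReal)+1) * ((m.choose j : ENNReal) * z ^ j) := fun j _ => hstep j
  rw [Finset.sum_congr rfl this, ← Finset.mul_sum]
  congr 1
  rw [add_comm (1:ENNReal) z, add_pow]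
  exact Finset.sum_congr rfl fun k hk => by ring

lemma one_add_p (t : ℕ) : (1:ENNReal) + (1 - 2 * a (t+1)) = 2 * (1 - a (t+1)) := by
  have h1 : (1:ENNReal) + (1 - 2 * a (t+1)) + 2 * a (t+1) = 2 + 2 * a (t+1) - 2 * a (t+1) := by
    rw [add_assoc, tsub_add_cancel_of_le (by rw [two_mul_a_succ]; exact a_le_one t)]
    rw [ENNReal.add_sub_cancel_right (by simp [a, ENNReal.mul_ne_top])]
    norm_num
  have h2 : 2 * (1 - a (t+1)) + 2 * a (t+1) = 2 + 2 * a (t+1) - 2 * a (t+1) := by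
    rw [← mul_add, tsub_add_cancel_of_le (a_le_one (t+1))]
    rw [ENNReal.add_sub_cancel_right (by simp [a, ENNReal.mul_ne_top])]
    norm_num
  have := h1.trans h2.symm
  exact (ENNReal.add_left_inj (by simp [a, ENNReal.mul_ne_top])).mp this

lemma q_rec_tail (m : ℕ) (hm : 1 ≤ m) :
    q (m+1) = ∑' t : ℕ, ((m:ENNReal)+1) * (a (t+2) * (1 - 2 * a (t+2)) ^ m) := by
  rw [q, tsum_eq_zero_add' ENNReal.summable]
  have h0 : ((m+1:ℕ):ENNReal) * (a (0+1) * (1 - 2 * a (0+1)) ^ (m+1-1)) = 0 := by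
    have h1 : 2 * a (0+1) = (1:ENNReal) := by rw [two_mul_a_succ 0]; simp [a]
    rw [h1, tsub_self, zero_pow (by omega), mul_zero, mul_zero]
  rw [h0, zero_add]
  refine tsum_congr fun t => ?_
  push_cast
  norm_num

set_option maxHeartbeats 1000000 in
lemma q_rec (n : ℕ) (hn : 2 ≤ n) :
    q n = 2⁻¹ ^ n * ∑ k ∈ Finset.Icc 1 n, (n.choose k : ENNReal) * q k := by
  obtain ⟨m, rfl⟩ : ∃ m, n = m + 1 := ⟨n - 1, by omega⟩
  -- rewrite q k as k * tsum
  have hq : ∀ k : ℕ, q k = (k : ENNReal) * ∑' t : ℕ, a (t+1) * (1 - 2 * a (t+1)) ^ (k-1) := by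
    intro k; rw [q, ENNReal.tsum_mul_left]
  -- RHS transformation
  have hswap : ∑ k ∈ Finset.Icc 1 (m+1), ((m+1).choose k : ENNReal) * q k
      = ∑' t : ℕ, ∑ k ∈ Finset.Icc 1 (m+1),
          ((m+1).choose k : ENNReal) * ((k : ENNReal) * (a (t+1) * (1 - 2 * a (t+1)) ^ (k-1))) := by
    rw [Summable.tsum_finsetSum (fun i _ => ENNReal.summable)]
    refine Finset.sum_congr rfl fun k hk => ?_
    rw [hq k, ENNReal.tsum_mul_left, ENNReal.tsum_mul_left]
  have hinner : ∀ t : ℕ, ∑ k ∈ Finset.Icc 1 (m+1),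
      ((m+1).choose k : ENNReal) * ((k : ENNReal) * (a (t+1) * (1 - 2 * a (t+1)) ^ (k-1)))
      = a (t+1) * (((m:ENNReal)+1) * (2 * (1 - a (t+1))) ^ m) := by
    intro t
    have : ∀ k ∈ Finset.Icc 1 (m+1),
        ((m+1).choose k : ENNReal) * ((k : ENNReal) * (a (t+1) * (1 - 2 * a (t+1)) ^ (k-1)))
        = a (t+1) * (((m+1).choose k : ENNReal) * ((k : ENNReal) * (1 - 2 * a (t+1)) ^ (k-1))) :=
      fun k _ => by ring
    rw [Finset.sum_congr rfl this, ← Finset.mul_sum, binom, ← one_add_p]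
  rw [hswap]
  have : (2⁻¹:ENNReal) ^ (m+1) * ∑' t, ∑ k ∈ Finset.Icc 1 (m+1),
      ((m+1).choose k : ENNReal) * ((k : ENNReal) * (a (t+1) * (1 - 2 * a (t+1)) ^ (k-1)))
      = ∑' t : ℕ, ((m:ENNReal)+1) * (a (t+2) * (1 - 2 * a (t+2)) ^ m) := by
    rw [← ENNReal.tsum_mul_left]
    refine tsum_congr fun t => ?_
    rw [hinner t]
    rw [mul_pow]
    have h2m : (2⁻¹:ENNReal) ^ (m+1) * 2 ^ m = 2⁻¹ := by
      rw [pow_succ, mul_comm ((2⁻¹:ENNReal)^m) 2⁻¹, mul_assoc, ← mul_pow,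
        ENNReal.inv_mul_cancel (by norm_num) (by norm_num), one_pow, mul_one]
    have h1 : 2 * a (t+2) = a (t+1) := two_mul_a_succ (t+1)
    have h2 : a (t+2) = 2⁻¹ * a (t+1) := a_succ (t+1)
    calc (2⁻¹:ENNReal) ^ (m+1) * (a (t+1) * (((m:ENNReal)+1) * (2 ^ m * (1 - a (t+1)) ^ m)))
        = ((m:ENNReal)+1) * ((2⁻¹ * a (t+1)) * ((2⁻¹:ENNReal) ^ m * 2 ^ m * (1 - a (t+1)) ^ m)) := by
          rw [pow_succ]; ring
      _ = ((m:ENNReal)+1) * (a (t+2) * (1 - a (t+1)) ^ m) := by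
          rw [← mul_pow, ENNReal.inv_mul_cancel (by norm_num) (by norm_num), one_pow, one_mul, ← h2]
      _ = ((m:ENNReal)+1) * (a (t+2) * (1 - 2 * a (t+2)) ^ m) := by rw [h1]
  rw [this, q_rec_tail m (by omega)]

lemma tsum_a_succ : ∑' t : ℕ, a (t+1) = 1 := by
  simp only [a, pow_succ, ENNReal.tsum_mul_right]
  rw [ENNReal.tsum_geometric]
  rw [ENNReal.one_sub_inv_two, inv_inv, ENNReal.mul_inv_cancel (by norm_num) (by norm_num)]

lemma q_one : q 1 = 1 := by
  simp [q, tsum_a_succ]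

lemma q_ne_top (n : ℕ) : q n ≠ ⊤ := by
  have h : q n ≤ (n : ENNReal) * 1 := by
    rw [← tsum_a_succ, ← ENNReal.tsum_mul_left]
    refine ENNReal.tsum_le_tsum fun t => ?_
    gcongr
    exact mul_le_of_le_one_right zero_le (pow_le_one' tsub_le_self _)
  exact ne_top_of_le_ne_top (by simp) h

lemma twothirds_le (n : ℕ) (hn : 2 ≤ n) : ((n:ENNReal)+1) * (2/3) ≤ n := by
  rw [div_eq_mul_inv, ← mul_assoc, ← div_eq_mul_inv]
  rw [ENNReal.div_le_iff (by norm_num) (by norm_num)]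
  have : ((n:ENNReal)+1) * 2 = ((n+1)*2 : ℕ) := by push_cast; ring
  have h3 : (n:ENNReal) * 3 = ((n*3 : ℕ)) := by push_cast; ring
  rw [this, h3, Nat.cast_le]
  omega

lemma q_ge (n : ℕ) (hn : 1 ≤ n) : 2/3 ≤ q n := by
  induction n using Nat.strong_induction_on with
  | _ n ih =>
  rcases eq_or_lt_of_le hn with h1 | h2
  · rw [← h1, q_one]
    rw [ENNReal.div_le_iff (by norm_num) (by norm_num)]
    norm_num
  · -- n ≥ 2
    have hn2 : 2 ≤ n := h2
    set S : ℕ := ∑ k ∈ Finset.Icc 2 (n-1), n.choose k with hS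
    -- split of the Icc
    have hsplit : Finset.Icc 1 n = insert 1 (insert n (Finset.Icc 2 (n-1))) := by
      ext k
      simp only [Finset.mem_Icc, Finset.mem_insert]
      omega
    have h1n : (1:ℕ) ∉ insert n (Finset.Icc 2 (n-1)) := by
      simp only [Finset.mem_insert, Finset.mem_Icc]
      omega
    have hnn : n ∉ Finset.Icc 2 (n-1) := by
      simp only [Finset.mem_Icc]
      omega
    -- Nat binomial sum fact : S + (n + 2) = 2 ^ n
    have hSsum : S + (n + 2) = 2 ^ n := by
      have h := Nat.sum_range_choose n
      have hsplit2 : Finset.range (n+1) = insert 0 (insert 1 (insert n (Finset.Icc 2 (n-1)))) := by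
        ext k
        simp only [Finset.mem_range, Finset.mem_insert, Finset.mem_Icc]
        omega
      rw [hsplit2] at h
      rw [Finset.sum_insert (by simp only [Finset.mem_insert, Finset.mem_Icc]; omega),
        Finset.sum_insert h1n, Finset.sum_insert hnn] at h
      simp only [Nat.choose_zero_right, Nat.choose_one_right, Nat.choose_self] at h
      omega
    -- lower bound the sum
    have hsum : (n:ENNReal) + (q n + (2/3) * S) ≤
        ∑ k ∈ Finset.Icc 1 n, (n.choose k : ENNReal) * q k := by
      rw [hsplit, Finset.sum_insert h1n, Finset.sum_insert hnn]
      have e1 : (n.choose 1 : ENNReal) * q 1 = n := by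
        rw [Nat.choose_one_right, q_one, mul_one]
      have e2 : (n.choose n : ENNReal) * q n = q n := by
        rw [Nat.choose_self, Nat.cast_one, one_mul]
      rw [e1, e2]
      gcongr
      have : (2/3 : ENNReal) * S = ∑ k ∈ Finset.Icc 2 (n-1), (n.choose k : ENNReal) * (2/3) := by
        rw [← Finset.sum_mul, hS, mul_comm]
        congr 1
        push_cast
        rfl
      rw [this]
      refine Finset.sum_le_sum fun k hk => ?_
      simp only [Finset.mem_Icc] at hk
      exact mul_le_mul_right (ih k (by omega) (by omega)) _
    -- use the recursion
    have hrec := q_rec n hn2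
    have hmain : 2⁻¹^n * ((n:ENNReal) + (q n + (2/3) * S)) ≤ q n := by
      conv_rhs => rw [hrec]
      exact mul_le_mul_right hsum _
    -- rearrange
    have hre : 2⁻¹^n * q n + 2⁻¹^n * ((n:ENNReal) + (2/3) * S) ≤ q n := by
      calc 2⁻¹^n * q n + 2⁻¹^n * ((n:ENNReal) + (2/3) * S)
          = 2⁻¹^n * ((n:ENNReal) + (q n + (2/3) * S)) := by ring
        _ ≤ q n := hmain
    have hc : 2⁻¹^n * ((n:ENNReal) + (2/3) * S) ≤ q n - 2⁻¹^n * q n :=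
      ENNReal.le_sub_of_add_le_left (by simp [ENNReal.mul_ne_top, q_ne_top n]) hre
    have hsub : q n - 2⁻¹^n * q n = (1 - 2⁻¹^n) * q n := by
      rw [ENNReal.sub_mul (fun _ _ => q_ne_top n), one_mul]
    rw [hsub] at hc
    -- key numeric bound : (1 - 2⁻¹^n) * (2/3) ≤ c
    have hpow : (2⁻¹:ENNReal)^n * 2^n = 1 := by
      rw [← mul_pow, ENNReal.inv_mul_cancel (by norm_num) (by norm_num), one_pow]
    have hone : (1:ENNReal) - 2⁻¹^n = 2⁻¹^n * ((2^n - 1 : ℕ) : ENNReal) := by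
      have hcast : ((2^n - 1 : ℕ) : ENNReal) = 2^n - 1 := by
        rw [ENNReal.natCast_sub]
        push_cast
        rfl
      rw [hcast, ENNReal.mul_sub (fun _ _ => by simp), hpow, mul_one]
    have hkey : (1 - 2⁻¹^n) * (2/3) ≤ 2⁻¹^n * ((n:ENNReal) + (2/3) * S) := by
      rw [hone, mul_assoc]
      refine mul_le_mul_right ?_ _
      have hc2 : ((2^n - 1 : ℕ) : ENNReal) = (S:ENNReal) + ((n:ENNReal) + 1) := by
        have : (2^n - 1 : ℕ) = S + (n + 1) := by omega
        rw [this]; push_cast; ring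
      rw [hc2, add_mul]
      calc (S:ENNReal) * (2/3) + ((n:ENNReal)+1) * (2/3)
          ≤ (2/3) * S + (n:ENNReal) := by
            rw [mul_comm (S:ENNReal) (2/3 : ENNReal)]
            exact add_le_add_right (twothirds_le n hn2) _
        _ = (n:ENNReal) + (2/3) * S := by ring
    have hfinal : (1 - 2⁻¹^n) * (2/3) ≤ (1 - 2⁻¹^n) * q n := le_trans hkey hc
    have hne0 : (1:ENNReal) - 2⁻¹^n ≠ 0 := by
      rw [Ne, tsub_eq_zero_iff_le, not_le]
      calc (2⁻¹:ENNReal)^n ≤ 2⁻¹^1 := pow_le_pow_of_le_one zero_le (by simp [ENNReal.inv_le_one]) hn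
        _ < 1 := by rw [pow_one]; exact ENNReal.inv_lt_one.mpr (by norm_num)
    exact (ENNReal.mul_le_mul_iff_right hne0 (by simp)).mp hfinal

end GreenDecayAux

open GreenDecayAux

/-- Theorem 2, part 1: if `G₁, …, Gₙ` (`n ≥ 1`) are independent
geometric random variables with parameter `1/2` (`P(Gᵢ = t) = 2^(−t)` for
integers `t ≥ 1`), then with probability at least `2/3` some integer `t ≥ 1`
is attained by exactly one of the variables. -/
theorem green_decay_infinite (n : ℕ) (hn : 1 ≤ n)
    (Ω : Type*) [MeasurableSpace Ω] (μ : Measure Ω) [IsProbabilityMeasure μ]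
    (G : Fin n → Ω → ℕ) (hmeas : ∀ i, Measurable (G i))
    (hind : iIndepFun G μ)
    (hgeom : ∀ (i : Fin n) (t : ℕ), 1 ≤ t →
      μ {ω | G i ω = t} = (2 : ENNReal)⁻¹ ^ t) :
    2 / 3 ≤ μ {ω | ∃ t : ℕ, 1 ≤ t ∧ ∃! i : Fin n, G i ω = t} := by
  classical
  -- each G j is a.s. ≥ 1
  have hzero : ∀ j : Fin n, μ {ω | G j ω = 0} = 0 := by
    intro j
    have hdis : Pairwise (Function.onFun Disjoint fun t : ℕ => {ω | G j ω = t+1}) := by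
      intro s t hst
      refine Set.disjoint_left.mpr fun ω hs ht => hst ?_
      simp only [Set.mem_setOf_eq] at hs ht
      omega
    have hmeas' : ∀ t : ℕ, MeasurableSet {ω | G j ω = t+1} := fun t =>
      hmeas j (measurableSet_singleton (t+1))
    have hU : μ (⋃ t : ℕ, {ω | G j ω = t+1}) = 1 := by
      rw [measure_iUnion hdis hmeas']
      have : ∀ t : ℕ, μ {ω | G j ω = t+1} = a (t+1) := fun t => hgeom j (t+1) (by omega)
      rw [tsum_congr this, tsum_a_succ]
    have hsub : {ω | G j ω = 0} ⊆ (⋃ t : ℕ, {ω | G j ω = t+1})ᶜ := by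
      intro ω hω
      simp only [Set.mem_setOf_eq] at hω
      simp only [Set.mem_compl_iff, Set.mem_iUnion, Set.mem_setOf_eq]
      rintro ⟨t, ht⟩
      omega
    have hcompl : μ ((⋃ t : ℕ, {ω | G j ω = t+1})ᶜ) = 0 := by
      rw [measure_compl (MeasurableSet.iUnion hmeas') (measure_ne_top μ _), hU,
        measure_univ, tsub_self]
    exact le_antisymm (le_trans (measure_mono hsub) hcompl.le) zero_le
  -- CDF values
  have hle : ∀ (j : Fin n) (t : ℕ), μ {ω | G j ω ≤ t} + (2:ENNReal)⁻¹ ^ t = 1 := by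
    intro j t
    induction t with
    | zero =>
      have : {ω | G j ω ≤ 0} = {ω | G j ω = 0} := by ext ω; simp
      rw [this, hzero j, zero_add, pow_zero]
    | succ t iht =>
      have hsplit : {ω | G j ω ≤ t+1} = {ω | G j ω ≤ t} ∪ {ω | G j ω = t+1} := by
        ext ω; simp only [Set.mem_setOf_eq, Set.mem_union]; omega
      have hdisj : Disjoint {ω | G j ω ≤ t} {ω | G j ω = t+1} := by
        refine Set.disjoint_left.mpr fun ω h1 h2 => ?_
        simp only [Set.mem_setOf_eq] at *
        omega
      have hm2 : MeasurableSet {ω | G j ω = t+1} := hmeas j (measurableSet_singleton (t+1))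
      rw [hsplit, measure_union hdisj hm2, hgeom j (t+1) (by omega)]
      calc μ {ω | G j ω ≤ t} + (2:ENNReal)⁻¹^(t+1) + (2:ENNReal)⁻¹^(t+1)
          = μ {ω | G j ω ≤ t} + ((2:ENNReal)⁻¹^(t+1) + (2:ENNReal)⁻¹^(t+1)) := by ring
        _ = μ {ω | G j ω ≤ t} + (2:ENNReal)⁻¹^t := by
            congr 1
            rw [← two_mul]
            exact two_mul_a_succ t
        _ = 1 := iht
  have hle' : ∀ (j : Fin n) (t : ℕ), μ {ω | G j ω ≤ t} = 1 - (2:ENNReal)⁻¹ ^ t := fun j t =>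
    ENNReal.eq_sub_of_add_eq (by simp) (hle j t)
  -- the disjoint family of events
  set sets : ℕ → Fin n → Fin n → Set ℕ :=
    fun t i j => if j = i then {t+1} else Set.Iic t with hsets
  set A : ℕ × Fin n → Set Ω :=
    fun p => ⋂ j ∈ Finset.univ, G j ⁻¹' sets p.1 p.2 j with hA
  have hAmem : ∀ (p : ℕ × Fin n) (ω : Ω), ω ∈ A p ↔
      (G p.2 ω = p.1 + 1 ∧ ∀ j : Fin n, j ≠ p.2 → G j ω ≤ p.1) := by
    intro p ω
    simp only [hA, Set.mem_iInter, Set.mem_preimage, hsets]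
    constructor
    · intro h
      refine ⟨by simpa using h p.2 (Finset.mem_univ _), fun j hj => by simpa [hj] using h j (Finset.mem_univ _)⟩
    · intro ⟨h1, h2⟩ j _
      by_cases hj : j = p.2
      · subst hj; simpa using h1
      · simpa [hj] using h2 j hj
  -- measure of each A p
  have hAval : ∀ p : ℕ × Fin n,
      μ (A p) = (2:ENNReal)⁻¹ ^ (p.1+1) * (1 - (2:ENNReal)⁻¹ ^ p.1) ^ (n-1) := by
    intro ⟨t, i⟩
    have hmsets : ∀ j : Fin n, j ∈ Finset.univ → MeasurableSet (sets t i j) := by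
      intro j _
      by_cases hj : j = i <;> simp [hsets, hj, measurableSet_singleton]
    have := hind.measure_inter_preimage_eq_mul Finset.univ hmsets
    rw [hA]
    simp only
    rw [this]
    rw [← Finset.mul_prod_erase Finset.univ _ (Finset.mem_univ i)]
    have h1 : μ (G i ⁻¹' sets t i i) = (2:ENNReal)⁻¹ ^ (t+1) := by
      have : G i ⁻¹' sets t i i = {ω | G i ω = t+1} := by
        ext ω; simp [hsets]
      rw [this]; exact hgeom i (t+1) (by omega)
    have h2 : ∀ j ∈ Finset.univ.erase i, μ (G j ⁻¹' sets t i j) = 1 - (2:ENNReal)⁻¹ ^ t := by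
      intro j hj
      have hj' : j ≠ i := Finset.ne_of_mem_erase hj
      have : G j ⁻¹' sets t i j = {ω | G j ω ≤ t} := by
        ext ω; simp [hsets, hj']
      rw [this]; exact hle' j t
    rw [h1, Finset.prod_congr rfl h2, Finset.prod_const]
    congr 2
    rw [Finset.card_erase_of_mem (Finset.mem_univ i)]
    simp
  -- disjointness
  have hAdisj : Pairwise (Function.onFun Disjoint A) := by
    intro p p' hpp'
    refine Set.disjoint_left.mpr fun ω h h' => ?_
    rw [hAmem] at h h'
    obtain ⟨h1, h2⟩ := h
    obtain ⟨h1', h2'⟩ := h'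
    rcases Nat.lt_trichotomy p.1 p'.1 with hlt | heq | hgt
    · by_cases hii : p'.2 = p.2
      · rw [hii] at h1'; omega
      · have := h2 p'.2 (fun hc => hii hc); omega
    · have hii : p.2 ≠ p'.2 := by
        intro hc
        exact hpp' (Prod.ext heq hc)
      have := h2' p.2 (fun hc => hii hc); omega
    · by_cases hii : p.2 = p'.2
      · rw [hii] at h1; omega
      · have := h2' p.2 hii; omega
  have hAmeas : ∀ p : ℕ × Fin n, MeasurableSet (A p) := by
    intro p
    refine Finset.measurableSet_biInter _ fun j _ => hmeas j ?_
    by_cases hj : j = p.2 <;> simp [hsets, hj, measurableSet_singleton]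
  -- union is inside the target event
  have hsubset : (⋃ p : ℕ × Fin n, A p) ⊆ {ω | ∃ t : ℕ, 1 ≤ t ∧ ∃! i : Fin n, G i ω = t} := by
    rintro ω hω
    obtain ⟨p, hp⟩ := Set.mem_iUnion.mp hω
    rw [hAmem] at hp
    obtain ⟨h1, h2⟩ := hp
    refine ⟨p.1 + 1, by omega, p.2, h1, fun j hj => ?_⟩
    by_contra hc
    have := h2 j hc
    omega
  -- conclude
  have hq : μ (⋃ p : ℕ × Fin n, A p) = q n := by
    rw [measure_iUnion hAdisj hAmeas]
    have hprod : ∑' (p : ℕ × Fin n), μ (A p) = ∑' t : ℕ, ∑' i : Fin n, μ (A (t, i)) :=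
      ENNReal.tsum_prod (f := fun t i => μ (A (t, i)))
    rw [hprod, q]
    refine tsum_congr fun t => ?_
    rw [tsum_fintype]
    have : ∀ i ∈ Finset.univ, μ (A (t, i)) =
        (2:ENNReal)⁻¹ ^ (t+1) * (1 - (2:ENNReal)⁻¹ ^ t) ^ (n-1) := fun i _ => hAval (t, i)
    rw [Finset.sum_congr rfl this, Finset.sum_const, Finset.card_univ, Fintype.card_fin,
      nsmul_eq_mul]
    have h2a : 2 * a (t+1) = (2:ENNReal)⁻¹ ^ t := two_mul_a_succ t
    rw [← h2a]
    rfl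
  calc (2:ENNReal)/3 ≤ q n := q_ge n hn
    _ = μ (⋃ p : ℕ × Fin n, A p) := hq.symm
    _ ≤ μ {ω | ∃ t : ℕ, 1 ≤ t ∧ ∃! i : Fin n, G i ω = t} := measure_mono hsubset
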